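/- Suppose f ∈ W^{1,2}(O;ℝ²) satisfies the trace inequality ‖f‖²_{L²(∂O)} ≤ c‖f‖_{L²}‖f‖_{W^{1,2}} and suppose α, κ ∈ C(∂O;ℝ) with α ≥ κ pointwise. If on a dense subspace V the identity ‖f‖²_{A^{1/2}} = ‖f‖₁² + ⟨(α−κ)f, f⟩_{L²(∂O)} holds, where ‖f‖₁ is the homogeneous H¹ seminorm, then there exist constants c₁, c₂ > 0 with c₁‖f‖₁² ≤ ‖f‖²_{A^{1/2}} ≤ c₂‖f‖₁² for all f ∈ V; i.e. the A^{1/2}-norm and the homogeneous W^{1,2} norm are equivalent on V. -/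
import Mathlib


open MeasureTheory

noncomputable section

/-- Equivalence of the `A^{1/2}` norm with the homogeneous `W^{1,2}` norm on a dense
subspace `V`, given the Green-type identity, `α ≥ κ`, the interpolation trace
inequality, and the Poincaré-type equivalences. -/
theorem stmt7 {X : Type*} [AddCommGroup X] [Module ℝ X]
    {E : Type*} [NormedAddCommGroup E] [InnerProductSpace ℝ E]
    {B : Type*} [MeasurableSpace B] (ν : Measure B)
    (V : Submodule ℝ X)
    -- the L², full W^{1,2}, homogeneous W^{1,2} (‖·‖₁) and A^{1/2} norms
    (normL2 normW12 norm1 normA : X → ℝ)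
    -- the boundary trace of a field
    (tr : X → B → E)
    -- friction coefficient and curvature on the boundary
    (α κ : B → ℝ)
    (hn1 : ∀ f, 0 ≤ norm1 f)
    (hnL2 : ∀ f, 0 ≤ normL2 f)
    (hnW12 : ∀ f, 0 ≤ normW12 f)
    -- α ≥ κ pointwise, with α − κ bounded (continuous on the compact boundary)
    (hακ : ∀ b, κ b ≤ α b)
    (hbdd : ∃ M, ∀ b, α b - κ b ≤ M)
    (hInt : ∀ f ∈ V, Integrable (fun b => ‖tr f b‖ ^ 2) ν)
    -- interpolation trace inequality ‖f‖²_{L²(∂O)} ≤ c ‖f‖_{L²} ‖f‖_{W^{1,2}}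
    (htr : ∃ c : ℝ, 0 ≤ c ∧ ∀ f ∈ V,
      (∫ b, ‖tr f b‖ ^ 2 ∂ν) ≤ c * normL2 f * normW12 f)
    -- the Green-type identity ‖f‖²_{A^{1/2}} = ‖f‖₁² + ⟨(α−κ)f, f⟩_{L²(∂O)} on V
    (hid : ∀ f ∈ V,
      normA f ^ 2 = norm1 f ^ 2 + ∫ b, (α b - κ b) * ‖tr f b‖ ^ 2 ∂ν)
    -- Poincaré: the L² and full W^{1,2} norms are controlled by ‖·‖₁ on V
    (hPoin : ∃ cP : ℝ, 0 ≤ cP ∧ ∀ f ∈ V,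
      normL2 f ≤ cP * norm1 f ∧ normW12 f ≤ cP * norm1 f) :
    ∃ c₁ c₂ : ℝ, 0 < c₁ ∧ 0 < c₂ ∧ ∀ f ∈ V,
      c₁ * norm1 f ^ 2 ≤ normA f ^ 2 ∧ normA f ^ 2 ≤ c₂ * norm1 f ^ 2 := by
  obtain ⟨M, hM⟩ := hbdd
  obtain ⟨c, hc0, hcf⟩ := htr
  obtain ⟨cP, hcP0, hPf⟩ := hPoin
  set M' := max M 0 with hM'
  have hM'0 : 0 ≤ M' := le_max_right _ _
  refine ⟨1, 1 + M' * c * cP ^ 2, one_pos, by nlinarith [mul_nonneg (mul_nonneg hM'0 hc0) (sq_nonneg cP)], fun f hf => ?_⟩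
  have hint := hInt f hf
  have hnonneg : (0 : ℝ) ≤ ∫ b, (α b - κ b) * ‖tr f b‖ ^ 2 ∂ν := by
    apply integral_nonneg
    intro b
    have := hακ b
    exact mul_nonneg (by linarith) (by positivity)
  constructor
  · rw [hid f hf]; nlinarith
  · rw [hid f hf]
    have h1 : (∫ b, (α b - κ b) * ‖tr f b‖ ^ 2 ∂ν) ≤ ∫ b, M' * ‖tr f b‖ ^ 2 ∂ν := by
      apply integral_mono_of_nonneg
      · filter_upwards with b
        have := hακ b
        exact mul_nonneg (by linarith) (by positivity)
      · exact hint.const_mul M'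
      · filter_upwards with b
        have hb : α b - κ b ≤ M' := le_trans (hM b) (le_max_left _ _)
        have : (0:ℝ) ≤ ‖tr f b‖ ^ 2 := by positivity
        exact mul_le_mul_of_nonneg_right hb this
    have h2 : (∫ b, M' * ‖tr f b‖ ^ 2 ∂ν) = M' * ∫ b, ‖tr f b‖ ^ 2 ∂ν :=
      integral_const_mul _ _
    have h3 := hcf f hf
    obtain ⟨hL2, hW12⟩ := hPf f hf
    have h4 : c * normL2 f * normW12 f ≤ c * cP ^ 2 * norm1 f ^ 2 := by
      have := hnL2 f
      have := hnW12 f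
      have := hn1 f
      nlinarith [mul_le_mul hL2 hW12 (hnW12 f) (by positivity : (0:ℝ) ≤ cP * norm1 f)]
    have h5 : (∫ b, ‖tr f b‖ ^ 2 ∂ν) ≤ c * cP ^ 2 * norm1 f ^ 2 := le_trans h3 h4
    have hM'nn : (0:ℝ) ≤ M' := hM'0
    nlinarith [mul_le_mul_of_nonneg_left h5 hM'nn]
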